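/- Let 0 < a < b < 1. Let 𝒩 be a set of Bernoulli distributions on {0,1} all of whose success probabilities are ≤ a, with Bernoulli(a) ∈ 𝒩, and let 𝒜 be a set of Bernoulli distributions all of whose success probabilities are ≥ b, with Bernoulli(b) ∈ 𝒜. Define E* : {0,1} → (0,∞) by E*(1) = b/a and E*(0) = (1−b)/(1−a) (the likelihood ratio of Bernoulli(b) to Bernoulli(a)). Then E* is an e-variable for 𝒩, and it is growth-rate optimal in the worst case: sup over e-variables E for 𝒩 of inf over M ∈ 𝒜 of E_M[log E] = inf over M ∈ 𝒜 of E_M[log E*] = d(b,a), with expectations in the extended reals. -/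
import Mathlib


open MeasureTheory Real Set
open scoped ENNReal

noncomputable section

attribute [local instance] Classical.propDecidable

/-- Bernoulli measure on `Bool` with success probability `p`. -/
def bern (p : ℝ) : Measure Bool :=
  (ENNReal.ofReal (1 - p)) • Measure.dirac false + (ENNReal.ofReal p) • Measure.dirac true

/-- Nonnegative part of an extended real, as an extended nonnegative real. -/
def eToENN (x : EReal) : ℝ≥0∞ := if x = ⊤ then ⊤ else ENNReal.ofReal x.toReal

/-- Integral of an extended-real-valued function, with values in the extended reals. -/
def eintE {Y : Type*} [MeasurableSpace Y] (μ : Measure Y) (f : Y → EReal) : EReal :=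
  ((∫⁻ y, eToENN (f y) ∂μ : ℝ≥0∞) : EReal) - ((∫⁻ y, eToENN (-(f y)) ∂μ : ℝ≥0∞) : EReal)

/-- Extended-real logarithm, with `log x = -∞` for `x ≤ 0`. -/
def elog (x : ℝ) : EReal := if x ≤ 0 then ⊥ else ((Real.log x : ℝ) : EReal)

lemma lint_bern (q : ℝ) (h : Bool → ℝ≥0∞) :
    ∫⁻ y, h y ∂(bern q) = ENNReal.ofReal (1-q) * h false + ENNReal.ofReal q * h true := by
  simp [bern, lintegral_add_measure, lintegral_smul_measure, lintegral_dirac]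

lemma eToENN_coe (c : ℝ) : eToENN (c : EReal) = ENNReal.ofReal c := by
  simp [eToENN]

lemma eToENN_neg_coe (c : ℝ) : eToENN (-(c : EReal)) = ENNReal.ofReal (-c) := by
  rw [← EReal.coe_neg, eToENN_coe]

lemma elog_of_pos {x : ℝ} (hx : 0 < x) : elog x = ((Real.log x : ℝ) : EReal) := by
  simp [elog, not_le.2 hx]

lemma eintE_bern (q c0 c1 : ℝ) (hq0 : 0 ≤ q) (hq1 : q ≤ 1) (f : Bool → EReal)
    (hf : f false = (c0 : EReal)) (ht : f true = (c1 : EReal)) :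
    eintE (bern q) f = (((1-q)*c0 + q*c1 : ℝ) : EReal) := by
  have hA : ∫⁻ y, eToENN (f y) ∂(bern q)
      = ENNReal.ofReal (1-q) * ENNReal.ofReal c0 + ENNReal.ofReal q * ENNReal.ofReal c1 := by
    rw [lint_bern, hf, ht, eToENN_coe, eToENN_coe]
  have hB : ∫⁻ y, eToENN (-(f y)) ∂(bern q)
      = ENNReal.ofReal (1-q) * ENNReal.ofReal (-c0) + ENNReal.ofReal q * ENNReal.ofReal (-c1) := by
    rw [lint_bern, hf, ht, eToENN_neg_coe, eToENN_neg_coe]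
  rw [eintE, hA, hB]
  rw [EReal.coe_ennreal_add, EReal.coe_ennreal_add, EReal.coe_ennreal_mul, EReal.coe_ennreal_mul,
    EReal.coe_ennreal_mul, EReal.coe_ennreal_mul]
  simp only [EReal.coe_ennreal_ofReal]
  norm_cast
  have e0 := max_zero_sub_max_neg_zero_eq_self c0
  have e1 := max_zero_sub_max_neg_zero_eq_self c1
  have hm : max (1-q) 0 = 1-q := max_eq_left (by linarith)
  have hmq : max q 0 = q := max_eq_left hq0
  rw [hm, hmq]
  linear_combination (1-q)*e0 + q*e1

lemma eintE_bot_false (q : ℝ) (hq : q < 1) (f : Bool → EReal) (hf : f false = ⊥) :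
    eintE (bern q) f = ⊥ := by
  have hB : ∫⁻ y, eToENN (-(f y)) ∂(bern q) = ⊤ := by
    rw [lint_bern]
    have h1 : eToENN (-(f false)) = ⊤ := by simp [hf, eToENN]
    rw [h1, ENNReal.mul_top (by simp [ENNReal.ofReal_eq_zero]; linarith)]
    simp
  rw [eintE, hB, EReal.coe_ennreal_top, EReal.sub_top]

lemma eintE_bot_true (q : ℝ) (hq : 0 < q) (f : Bool → EReal) (hf : f true = ⊥) :
    eintE (bern q) f = ⊥ := by
  have hB : ∫⁻ y, eToENN (-(f y)) ∂(bern q) = ⊤ := by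
    rw [lint_bern]
    have h1 : eToENN (-(f true)) = ⊤ := by simp [hf, eToENN]
    rw [h1, ENNReal.mul_top (by simp [ENNReal.ofReal_eq_zero]; linarith)]
    simp
  rw [eintE, hB, EReal.coe_ennreal_top, EReal.sub_top]

lemma gro_key (a b x y : ℝ) (ha : 0 < a) (hab : a < b) (hb : b < 1)
    (hx : 0 < x) (hy : 0 < y) (h : (1-a)*x + a*y ≤ 1) :
    (1-b) * Real.log x + b * Real.log y
      ≤ (1-b) * Real.log ((1-b)/(1-a)) + b * Real.log (b/a) := by
  have hb0 : 0 < b := lt_trans ha hab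
  have hb1 : (0:ℝ) < 1 - b := by linarith
  have ha1 : (0:ℝ) < 1 - a := by linarith
  set p1 := (1-a)*x/(1-b) with hp1def
  set p2 := a*y/b with hp2def
  have hp1 : 0 < p1 := div_pos (mul_pos ha1 hx) hb1
  have hp2 : 0 < p2 := div_pos (mul_pos ha hy) hb0
  have hcc := strictConcaveOn_log_Ioi.concaveOn.2 (Set.mem_Ioi.2 hp1) (Set.mem_Ioi.2 hp2)
    hb1.le hb0.le (by ring)
  try simp only [smul_eq_mul] at hcc
  have harg : (1-b)*p1 + b*p2 = (1-a)*x + a*y := by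
    rw [hp1def, hp2def]
    field_simp
  rw [harg] at hcc
  have hlog0 : Real.log ((1-a)*x + a*y) ≤ 0 := Real.log_nonpos (add_nonneg (mul_nonneg ha1.le hx.le) (mul_nonneg ha.le hy.le)) h
  have hl1 : Real.log p1 = Real.log (1-a) + Real.log x - Real.log (1-b) := by
    rw [hp1def, Real.log_div (by positivity) hb1.ne', Real.log_mul ha1.ne' hx.ne']
  have hl2 : Real.log p2 = Real.log a + Real.log y - Real.log b := by
    rw [hp2def, Real.log_div (by positivity) hb0.ne', Real.log_mul ha.ne' hy.ne']
  have hd1 : Real.log ((1-b)/(1-a)) = Real.log (1-b) - Real.log (1-a) :=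
    Real.log_div hb1.ne' ha1.ne'
  have hd2 : Real.log (b/a) = Real.log b - Real.log a := Real.log_div hb0.ne' ha.ne'
  rw [hl1, hl2] at hcc
  rw [hd1, hd2]
  nlinarith [hcc, hlog0]

lemma evar_ineq (a b p : ℝ) (ha : 0 < a) (hab : a < b) (hb : b < 1)
    (hp0 : 0 ≤ p) (hpa : p ≤ a) :
    (1-p)*((1-b)/(1-a)) + p*(b/a) ≤ 1 := by
  have ha1 : (0:ℝ) < 1 - a := by linarith
  rw [← mul_div_assoc, ← mul_div_assoc, div_add_div _ _ ha1.ne' ha.ne',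
    div_le_one (mul_pos ha1 ha)]
  nlinarith [mul_nonneg (by linarith : (0:ℝ) ≤ a - p) (by linarith : (0:ℝ) ≤ b - a)]

/-- For Bernoulli classes separated by `a < b`, the likelihood ratio
`E*` of `Bernoulli(b)` to `Bernoulli(a)` is an e-variable for the null class and is
growth-rate optimal in the worst case, with optimal value `d(b,a)`. -/
theorem grow_bernoulli_classes (a b : ℝ) (ha : 0 < a) (hab : a < b) (hb : b < 1)
    (𝒩 𝒜 : Set (Measure Bool))
    (h𝒩 : ∀ μ ∈ 𝒩, ∃ p : ℝ, 0 ≤ p ∧ p ≤ a ∧ μ = bern p) (ha𝒩 : bern a ∈ 𝒩)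
    (h𝒜 : ∀ μ ∈ 𝒜, ∃ p : ℝ, b ≤ p ∧ p ≤ 1 ∧ μ = bern p) (hb𝒜 : bern b ∈ 𝒜)
    (Estar : Bool → ℝ) (hE : Estar = fun y => if y then b / a else (1 - b) / (1 - a)) :
    (∀ μ ∈ 𝒩, (∫⁻ y, ENNReal.ofReal (Estar y) ∂μ) ≤ 1) ∧
      (⨆ E ∈ {E : Bool → ℝ | (∀ y, 0 ≤ E y) ∧
          ∀ μ ∈ 𝒩, (∫⁻ y, ENNReal.ofReal (E y) ∂μ) ≤ 1},
        ⨅ M ∈ 𝒜, eintE M (fun y => elog (E y))) =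
        (⨅ M ∈ 𝒜, eintE M (fun y => elog (Estar y))) ∧
      (⨅ M ∈ 𝒜, eintE M (fun y => elog (Estar y))) =
        ((b * Real.log (b / a) + (1 - b) * Real.log ((1 - b) / (1 - a)) : ℝ) : EReal) := by
  have hb0 : 0 < b := lt_trans ha hab
  have hb1 : (0:ℝ) < 1 - b := by linarith
  have ha1 : (0:ℝ) < 1 - a := by linarith
  have hEt : Estar true = b / a := by rw [hE]; simp
  have hEf : Estar false = (1-b) / (1-a) := by rw [hE]; simp
  set c0 : ℝ := Real.log ((1-b)/(1-a)) with hc0def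
  set c1 : ℝ := Real.log (b/a) with hc1def
  have hc1 : 0 ≤ c1 := Real.log_nonneg ((one_le_div ha).2 hab.le)
  have hc0 : c0 ≤ 0 := Real.log_nonpos (div_nonneg hb1.le ha1.le) ((div_le_one ha1).2 (by linarith))
  -- Part 1: e-variable
  have P1 : ∀ μ ∈ 𝒩, (∫⁻ y, ENNReal.ofReal (Estar y) ∂μ) ≤ 1 := by
    intro μ hμ
    obtain ⟨p, hp0, hpa, rfl⟩ := h𝒩 μ hμ
    clear hμ
    rw [lint_bern, hEf, hEt, ← ENNReal.ofReal_mul (by linarith), ← ENNReal.ofReal_mul hp0,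
      ← ENNReal.ofReal_add (mul_nonneg (by linarith) (div_nonneg hb1.le ha1.le)) (mul_nonneg hp0 (div_nonneg hb0.le ha.le))]
    exact ENNReal.ofReal_le_one.2 (evar_ineq a b p ha hab hb hp0 hpa)
  -- value of the Estar integral at bern q
  have hval : ∀ q : ℝ, 0 ≤ q → q ≤ 1 →
      eintE (bern q) (fun y => elog (Estar y)) = (((1-q)*c0 + q*c1 : ℝ) : EReal) := by
    intro q h0 h1
    exact eintE_bern q c0 c1 h0 h1 _
      (by simp only [hEf]; exact elog_of_pos (div_pos hb1 ha1))
      (by simp only [hEt]; exact elog_of_pos (div_pos hb0 ha))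
  -- Part 3: the infimum equals d(b,a)
  have h3 : (⨅ M ∈ 𝒜, eintE M (fun y => elog (Estar y))) =
      ((b * Real.log (b / a) + (1 - b) * Real.log ((1 - b) / (1 - a)) : ℝ) : EReal) := by
    apply le_antisymm
    · refine le_trans (iInf₂_le (bern b) hb𝒜) ?_
      rw [hval b hb0.le hb.le]
      exact le_of_eq (by norm_cast; ring)
    · apply le_iInf₂
      intro M hM
      obtain ⟨q, hbq, hq1, rfl⟩ := h𝒜 M hM
      rw [hval q (by linarith) hq1]
      apply EReal.coe_le_coe_iff.2
      nlinarith [mul_nonneg (by linarith : (0:ℝ) ≤ q - b) (by linarith : (0:ℝ) ≤ c1 - c0)]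
  refine ⟨P1, ?_, h3⟩
  -- Part 2: the sup over e-variables
  apply le_antisymm
  · apply iSup₂_le
    intro E hES
    obtain ⟨hEnn, hEev⟩ := hES
    refine le_trans (iInf₂_le (bern b) hb𝒜) ?_
    rw [h3]
    rcases eq_or_lt_of_le (hEnn false) with h0 | h0
    · rw [eintE_bot_false b hb _ (by simp [elog, ← h0])]
      exact bot_le
    rcases eq_or_lt_of_le (hEnn true) with h1 | h1
    · rw [eintE_bot_true b hb0 _ (by simp [elog, ← h1])]
      exact bot_le
    rw [eintE_bern b (Real.log (E false)) (Real.log (E true)) hb0.le hb.le _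
      (elog_of_pos h0) (elog_of_pos h1)]
    apply EReal.coe_le_coe_iff.2
    have hev := hEev (bern a) ha𝒩
    rw [lint_bern, ← ENNReal.ofReal_mul (by linarith), ← ENNReal.ofReal_mul ha.le,
      ← ENNReal.ofReal_add (mul_nonneg (by linarith) (hEnn false))
        (mul_nonneg ha.le (hEnn true))] at hev
    have hsum : (1-a) * E false + a * E true ≤ 1 := ENNReal.ofReal_le_one.1 hev
    have := gro_key a b (E false) (E true) ha hab hb h0 h1 hsum
    linarith
  · have hS : Estar ∈ {E : Bool → ℝ | (∀ y, 0 ≤ E y) ∧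
        ∀ μ ∈ 𝒩, (∫⁻ y, ENNReal.ofReal (E y) ∂μ) ≤ 1} := by
      refine ⟨?_, P1⟩
      intro y
      cases y
      · rw [hEf]; exact div_nonneg hb1.le ha1.le
      · rw [hEt]; exact div_nonneg hb0.le ha.le
    exact le_iSup₂ (f := fun E (_ : E ∈ {E : Bool → ℝ | (∀ y, 0 ≤ E y) ∧
        ∀ μ ∈ 𝒩, (∫⁻ y, ENNReal.ofReal (E y) ∂μ) ≤ 1}) =>
      ⨅ M ∈ 𝒜, eintE M (fun y => elog (E y))) Estar hS
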